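/- arXiv:1512.08722 — 3 statements merged into one kernel-verified Lean document; each statement's English description precedes it below -/
import Mathlib

section
/- Let ψ: ℝ → ℝ be an even, continuously differentiable function such that t ↦ ψ(√t) is concave on [0, +∞) and lim_{t→0} ψ'(t)/t exists and is finite. Define ν(t) = ψ'(t)/t for t ≠ 0 (extended by continuity at 0). Then for every t, t' ∈ ℝ, ψ(t') ≤ ψ(t) + ψ'(t)(t' - t) + (1/2) ν(|t|) (t' - t)². -/
/-- Half-quadratic majorization property (Eq. (14)). -/
theorem halfquadratic_majorization
    (ψ ν : ℝ → ℝ)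
    (heven : ∀ t : ℝ, ψ (-t) = ψ t)
    (hC1 : ContDiff ℝ 1 ψ)
    (hconc : ConcaveOn ℝ (Set.Ici (0 : ℝ)) (fun t => ψ (Real.sqrt t)))
    (hν : ∀ t : ℝ, t ≠ 0 → ν t = deriv ψ t / t)
    (hlim : Filter.Tendsto (fun t => deriv ψ t / t) (nhdsWithin 0 {(0 : ℝ)}ᶜ)
      (nhds (ν 0))) :
    ∀ t t' : ℝ,
      ψ t' ≤ ψ t + deriv ψ t * (t' - t) + (1 / 2) * ν |t| * (t' - t) ^ 2 := by
  intro t t'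
  have hdiff : Differentiable ℝ ψ := hC1.differentiable one_ne_zero
  -- derivative of ψ is odd
  have hodd : ∀ x : ℝ, deriv ψ (-x) = - deriv ψ x := by
    intro x
    have h1 : HasDerivAt (fun y : ℝ => ψ (-y)) (deriv ψ (-x) * (-1)) x :=
      (hdiff (-x)).hasDerivAt.comp x (hasDerivAt_neg x)
    have h2 : (fun y : ℝ => ψ (-y)) = ψ := funext heven
    rw [h2] at h1
    have h3 := h1.deriv
    linarith
  have hpsi_abs : ∀ x : ℝ, ψ (Real.sqrt (x ^ 2)) = ψ x := by
    intro x
    rw [Real.sqrt_sq_eq_abs]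
    rcases abs_choice x with h | h
    · rw [h]
    · rw [h]; exact heven x
  -- tangent-line inequality for the concave function s ↦ ψ (√s)
  have tangent : ∀ a b d : ℝ, 0 ≤ a → 0 ≤ b →
      HasDerivAt (fun s => ψ (Real.sqrt s)) d a →
      ψ (Real.sqrt b) ≤ ψ (Real.sqrt a) + d * (b - a) := by
    intro a b d ha hb hd
    rcases lt_trichotomy a b with h | h | h
    · have := hconc.slope_le_of_hasDerivAt (Set.mem_Ici.mpr ha) (Set.mem_Ici.mpr hb) h hd
      rw [slope_def_field, div_le_iff₀ (by linarith)] at this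
      nlinarith
    · subst h; simp
    · have := hconc.le_slope_of_hasDerivAt (Set.mem_Ici.mpr hb) (Set.mem_Ici.mpr ha) h hd
      rw [slope_def_field, le_div_iff₀ (by linarith)] at this
      nlinarith
  -- derivative of s ↦ ψ(√s) at u², u > 0
  have hderφ : ∀ u : ℝ, 0 < u →
      HasDerivAt (fun s => ψ (Real.sqrt s)) (deriv ψ u / u / 2) (u ^ 2) := by
    intro u hu
    have hsq : HasDerivAt Real.sqrt (1 / (2 * u)) (u ^ 2) := by
      have h := Real.hasDerivAt_sqrt (x := u ^ 2) (by positivity)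
      rwa [Real.sqrt_sq hu.le] at h
    have hψ : HasDerivAt ψ (deriv ψ u) (Real.sqrt (u ^ 2)) := by
      rw [Real.sqrt_sq hu.le]; exact (hdiff u).hasDerivAt
    have h := hψ.comp (u ^ 2) hsq
    have : deriv ψ u * (1 / (2 * u)) = deriv ψ u / u / 2 := by
      rw [mul_one_div, div_div, mul_comm]
    rwa [this] at h
  -- explicit tangent inequality for u > 0
  have tangent' : ∀ u : ℝ, 0 < u → ∀ b : ℝ, 0 ≤ b →
      ψ (Real.sqrt b) ≤ ψ u + (deriv ψ u / u / 2) * (b - u ^ 2) := by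
    intro u hu b hb
    have h := tangent (u ^ 2) b (deriv ψ u / u / 2) (by positivity) hb (hderφ u hu)
    rwa [Real.sqrt_sq hu.le] at h
  -- the t = 0 case via the limit
  have hzero : ∀ b : ℝ, 0 ≤ b → ψ (Real.sqrt b) ≤ ψ 0 + ν 0 / 2 * b := by
    intro b hb
    set F : ℝ → ℝ := fun s => ψ (Real.sqrt s) + (deriv ψ (Real.sqrt s) / Real.sqrt s / 2) * (b - s)
      with hF
    have hsqrt : Filter.Tendsto Real.sqrt (nhdsWithin 0 (Set.Ioi 0))
        (nhdsWithin 0 {(0 : ℝ)}ᶜ) := by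
      rw [tendsto_nhdsWithin_iff]
      constructor
      · have := Real.continuous_sqrt.tendsto 0
        rw [Real.sqrt_zero] at this
        exact this.mono_left nhdsWithin_le_nhds
      · filter_upwards [self_mem_nhdsWithin] with s hs
        exact ne_of_gt (Real.sqrt_pos.mpr hs)
    have hφcont : Filter.Tendsto (fun s => ψ (Real.sqrt s)) (nhdsWithin 0 (Set.Ioi 0))
        (nhds (ψ 0)) := by
      have := (hC1.continuous.comp Real.continuous_sqrt).tendsto 0
      simp only [Function.comp, Real.sqrt_zero] at this
      exact this.mono_left nhdsWithin_le_nhds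
    have hFtends : Filter.Tendsto F (nhdsWithin 0 (Set.Ioi 0)) (nhds (ψ 0 + ν 0 / 2 * b)) := by
      have h1 : Filter.Tendsto (fun s => deriv ψ (Real.sqrt s) / Real.sqrt s)
          (nhdsWithin 0 (Set.Ioi 0)) (nhds (ν 0)) := hlim.comp hsqrt
      have h2 : Filter.Tendsto (fun s : ℝ => b - s) (nhdsWithin 0 (Set.Ioi 0)) (nhds b) := by
        have : Filter.Tendsto (fun s : ℝ => b - s) (nhds 0) (nhds (b - 0)) :=
          tendsto_const_nhds.sub Filter.tendsto_id
        rw [sub_zero] at this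
        exact this.mono_left nhdsWithin_le_nhds
      exact hφcont.add (((h1.div_const 2).mul h2))
    refine ge_of_tendsto hFtends ?_
    filter_upwards [self_mem_nhdsWithin] with s hs
    have hspos : (0 : ℝ) < s := hs
    have hu : 0 < Real.sqrt s := Real.sqrt_pos.mpr hspos
    have h := tangent' (Real.sqrt s) hu b hb
    rwa [Real.sq_sqrt hspos.le] at h
  rcases eq_or_ne t 0 with rfl | ht
  · have h0 : deriv ψ 0 = 0 := by
      have h := hodd 0
      rw [neg_zero] at h
      linarith
    have h := hzero (t' ^ 2) (by positivity)
    rw [hpsi_abs t'] at h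
    simp only [abs_zero, h0, zero_mul, add_zero, sub_zero]
    nlinarith
  · have hu : 0 < |t| := abs_pos.mpr ht
    have hν' : ν |t| = deriv ψ |t| / |t| := hν _ (ne_of_gt hu)
    set c : ℝ := deriv ψ |t| / |t| with hc
    have hct : c * t = deriv ψ t := by
      rcases abs_choice t with h | h
      · rw [hc, h]; field_simp
      · rw [hc, h, hodd]
        field_simp
    have htan := tangent' |t| hu (t' ^ 2) (by positivity)
    rw [hpsi_abs t', sq_abs] at htan
    have hψt : ψ |t| = ψ t := by
      rcases abs_choice t with h | h
      · rw [h]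
      · rw [h]; exact heven t
    rw [hψt, ← hc] at htan
    have key : ψ t + c / 2 * (t' ^ 2 - t ^ 2)
        = ψ t + (c * t) * (t' - t) + 1 / 2 * c * (t' - t) ^ 2 := by ring
    rw [hν', ← hct]
    linarith [htan, key]
end

section
/- Let Fₙ(h) = (1/2)ρₙ - rₙᵀh + (1/2)hᵀRₙh + Ψ(h), where Ψ(h) = (1/2)hᵀV₀h - v₀ᵀh + Σ_{s=1}^S ψ_s(‖V_s h - v_s‖), each ψ_s being even, C¹, with ψ_s(√·) concave on [0,∞) and ν_s(t) = ψ'_s(t)/t bounded and nonnegative. Then for every h, the function Θₙ(h', h) = Fₙ(h) + ∇Fₙ(h)ᵀ(h' - h) + (1/2)(h' - h)ᵀAₙ(h)(h' - h), with Aₙ(h) = Rₙ + V₀ + Vᵀ Diag(b(h)) V where V stacks V₁,...,V_S and b(h) repeats ν_s(‖V_s h - v_s‖) over coordinate blocks, is a tangent majorant of Fₙ at h: Fₙ(h') ≤ Θₙ(h', h) for all h' and Fₙ(h) = Θₙ(h, h). -/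
open Matrix

/-- Euclidean norm of a vector in `Fin P → ℝ`. -/
noncomputable def enorm {P : ℕ} (x : Fin P → ℝ) : ℝ :=
  Real.sqrt (∑ i, x i ^ 2)

open Set Filter

/-- tangent-line bound for `ψ` via concavity of `ψ ∘ sqrt`. -/
lemma hq_core (ψ ν : ℝ → ℝ)
    (hC1 : ContDiff ℝ 1 ψ)
    (hconc : ConcaveOn ℝ (Set.Ici (0:ℝ)) (fun t => ψ (Real.sqrt t)))
    (hν : ∀ t : ℝ, t ≠ 0 → ν t = deriv ψ t / t)
    (hνlim : Filter.Tendsto (fun t => deriv ψ t / t) (nhdsWithin 0 {(0:ℝ)}ᶜ) (nhds (ν 0))) :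
    ∀ a b : ℝ, 0 ≤ a → 0 ≤ b → ψ b ≤ ψ a + ν a * (b ^ 2 - a ^ 2) / 2 := by
  set g : ℝ → ℝ := fun t => ψ (Real.sqrt t) with hg
  -- derivative of g at positive points
  have hgd : ∀ a : ℝ, 0 < a → HasDerivAt g (deriv ψ a / a / 2) (a ^ 2) := by
    intro a ha
    have ha2 : (a : ℝ) ^ 2 ≠ 0 := by positivity
    have hsq : Real.sqrt (a ^ 2) = a := Real.sqrt_sq ha.le
    have h1 : HasDerivAt (fun x => Real.sqrt x) (1 / (2 * a)) (a ^ 2) := by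
      simpa [hsq] using Real.hasDerivAt_sqrt ha2
    have h2 : HasDerivAt ψ (deriv ψ a) (Real.sqrt (a ^ 2)) := by
      rw [hsq]; exact ((hC1.differentiable one_ne_zero) a).hasDerivAt
    have h3 := h2.comp (a ^ 2) (by simpa using h1)
    have h4 : HasDerivAt (ψ ∘ Real.sqrt) (deriv ψ a / a / 2) (a ^ 2) := by
      rw [show deriv ψ a / a / 2 = deriv ψ a * (a⁻¹ * 2⁻¹) by ring]; exact h3
    exact h4
  -- case a > 0
  have main : ∀ a b : ℝ, 0 < a → 0 ≤ b → ψ b ≤ ψ a + (deriv ψ a / a) * (b ^ 2 - a ^ 2) / 2 := by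
    intro a b ha hb
    have hga : g (a ^ 2) = ψ a := by simp [hg, Real.sqrt_sq ha.le]
    have hgb : g (b ^ 2) = ψ b := by simp [hg, Real.sqrt_sq hb]
    have hd := hgd a ha
    rcases lt_trichotomy (b ^ 2) (a ^ 2) with hlt | heq | hgt
    · have := hconc.le_slope_of_hasDerivAt (x := b ^ 2) (y := a ^ 2)
        (Set.mem_Ici.mpr (by positivity)) (Set.mem_Ici.mpr (by positivity)) hlt hd
      rw [slope_def_field, hga, hgb] at this
      have hpos : (0:ℝ) < a ^ 2 - b ^ 2 := by linarith
      rw [le_div_iff₀ hpos] at this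
      nlinarith
    · have : b = a := by nlinarith
      subst this; simp
    · have := hconc.slope_le_of_hasDerivAt (x := a ^ 2) (y := b ^ 2)
        (Set.mem_Ici.mpr (by positivity)) (Set.mem_Ici.mpr (by positivity)) hgt hd
      rw [slope_def_field, hga, hgb] at this
      have hpos : (0:ℝ) < b ^ 2 - a ^ 2 := by linarith
      rw [div_le_iff₀ hpos] at this
      nlinarith
  intro a b ha hb
  rcases ha.lt_or_eq with ha' | ha'
  · have := main a b ha' hb
    rw [hν a (ne_of_gt ha')]
    linarith
  · -- a = 0 : take the limit a → 0⁺
    subst ha'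
    have hne : (nhdsWithin (0:ℝ) (Set.Ioi 0)).NeBot := nhdsGT_neBot 0
    have hev : ∀ᶠ t in nhdsWithin (0:ℝ) (Set.Ioi 0),
        ψ b ≤ ψ t + (deriv ψ t / t) * (b ^ 2 - t ^ 2) / 2 :=
      eventually_mem_nhdsWithin.mono (fun t ht => main t b ht hb)
    have hmono : nhdsWithin (0:ℝ) (Set.Ioi 0) ≤ nhdsWithin 0 {(0:ℝ)}ᶜ :=
      nhdsWithin_mono 0 (fun t ht => ne_of_gt ht)
    have h1 : Tendsto (fun t : ℝ => ψ t + (deriv ψ t / t) * (b ^ 2 - t ^ 2) / 2)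
        (nhdsWithin (0:ℝ) (Set.Ioi 0))
        (nhds (ψ 0 + (ν 0) * (b ^ 2 - 0 ^ 2) / 2)) := by
      apply Tendsto.add
      · exact (hC1.continuous.tendsto 0).mono_left nhdsWithin_le_nhds
      · exact (((hνlim.mono_left hmono).mul
          (((continuous_const.sub (continuous_pow 2)).tendsto 0).mono_left
            nhdsWithin_le_nhds)).div_const 2)
    exact ge_of_tendsto h1 hev

/-- MVT bound near zero. -/
lemma hq_near_zero (ψ ν : ℝ → ℝ) (νbar : ℝ)
    (hC1 : ContDiff ℝ 1 ψ)
    (hν : ∀ t : ℝ, t ≠ 0 → ν t = deriv ψ t / t)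
    (hb : ∀ t : ℝ, 0 ≤ ν t ∧ ν t ≤ νbar) :
    ∀ b : ℝ, 0 ≤ b → |ψ b - ψ 0| ≤ νbar * b ^ 2 := by
  intro b hb0
  rcases hb0.lt_or_eq with hb' | hb'
  · obtain ⟨ξ, hξ, hξ'⟩ := exists_hasDerivAt_eq_slope ψ (deriv ψ) hb'
      (hC1.continuous.continuousOn)
      (fun x _ => ((hC1.differentiable one_ne_zero) x).hasDerivAt)
    have hξ0 : (0:ℝ) < ξ := hξ.1
    have hd : deriv ψ ξ = ν ξ * ξ := by
      rw [hν ξ (ne_of_gt hξ0)]; field_simp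
    have : ψ b - ψ 0 = ν ξ * ξ * b := by
      have := hξ'
      rw [hd] at this
      field_simp at this
      linarith [this]
    have hν1 := (hb ξ).1
    have hν2 := (hb ξ).2
    rw [this, abs_of_nonneg (mul_nonneg (mul_nonneg hν1 hξ0.le) hb0)]
    calc ν ξ * ξ * b ≤ νbar * ξ * b := by
          nlinarith [mul_nonneg (mul_nonneg (sub_nonneg.mpr hν2) hξ0.le) hb0]
      _ ≤ νbar * b * b := by
          nlinarith [mul_nonneg (mul_nonneg (hν1.trans hν2) (sub_nonneg.mpr hξ.2.le)) hb0]
      _ = νbar * b ^ 2 := by ring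
  · rw [← hb']; simp

/-- coordinate bound for mulVec. -/
lemma mulVec_entry_bound {Q R : ℕ} (V : Matrix (Fin Q) (Fin R) ℝ) (d : Fin R → ℝ) (i : Fin Q) :
    |(V.mulVec d) i| ≤ (∑ j, |V i j|) * ‖d‖ := by
  calc |(V.mulVec d) i| = |∑ j, V i j * d j| := rfl
    _ ≤ ∑ j, |V i j * d j| := Finset.abs_sum_le_sum_abs _ _
    _ ≤ ∑ j, |V i j| * ‖d‖ := by
        refine Finset.sum_le_sum fun j _ => ?_
        rw [abs_mul]
        exact mul_le_mul_of_nonneg_left (norm_le_pi_norm d j) (abs_nonneg _)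
    _ = (∑ j, |V i j|) * ‖d‖ := by rw [Finset.sum_mul]

lemma sq_sum_mulVec_bound {Q R : ℕ} (V : Matrix (Fin Q) (Fin R) ℝ) (d : Fin R → ℝ) :
    ∑ i, (V.mulVec d) i ^ 2 ≤ (∑ i, (∑ j, |V i j|) ^ 2) * ‖d‖ ^ 2 := by
  rw [Finset.sum_mul]
  refine Finset.sum_le_sum fun i _ => ?_
  have h1 := mulVec_entry_bound V d i
  have h2 : (0:ℝ) ≤ (∑ j, |V i j|) * ‖d‖ := by positivity
  calc (V.mulVec d) i ^ 2 = |(V.mulVec d) i| ^ 2 := (sq_abs _).symm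
    _ ≤ ((∑ j, |V i j|) * ‖d‖) ^ 2 := by nlinarith [abs_nonneg ((V.mulVec d) i)]
    _ = (∑ j, |V i j|) ^ 2 * ‖d‖ ^ 2 := by ring

/-- little-o of quadratically bounded remainders. -/
lemma quad_isLittleO {E : Type*} [NormedAddCommGroup E] [NormedSpace ℝ E] (f : E → ℝ) (C : ℝ)
    (hf : ∀ d : E, |f d| ≤ C * ‖d‖ ^ 2) : (fun d => f d) =o[nhds (0:E)] (fun d => d) := by
  have hbig : (fun d => f d) =O[nhds (0:E)] (fun d => ‖d‖ * ‖d‖) := by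
    refine Asymptotics.isBigO_of_le' (c := C) _ fun d => ?_
    have := hf d
    rw [Real.norm_eq_abs]
    calc |f d| ≤ C * ‖d‖ ^ 2 := this
      _ ≤ C * ‖(‖d‖ * ‖d‖)‖ := by
          rw [Real.norm_eq_abs, abs_of_nonneg (mul_nonneg (norm_nonneg d) (norm_nonneg d)), sq]
  have h1 : (fun d : E => ‖d‖) =o[nhds (0:E)] (fun _ => (1:ℝ)) :=
    (Asymptotics.isLittleO_one_iff ℝ).mpr tendsto_norm_zero
  have h2 := h1.mul_isBigO (Asymptotics.isBigO_refl (fun d : E => ‖d‖) (nhds 0))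
  have h4 : (fun d : E => (1:ℝ) * ‖d‖) =O[nhds (0:E)] (fun d => d) := by
    simpa using (Asymptotics.isBigO_refl (fun d : E => d) (nhds 0)).norm_left
  exact hbig.trans_isLittleO (h2.trans_isBigO h4)

/-- The continuous linear map `d ↦ u ⬝ᵥ V *ᵥ d`. -/
noncomputable def dpL {Q R : ℕ} (u : Fin Q → ℝ) (V : Matrix (Fin Q) (Fin R) ℝ) :
    (Fin R → ℝ) →L[ℝ] ℝ :=
  LinearMap.toContinuousLinearMap
    { toFun := fun d => u ⬝ᵥ V.mulVec d
      map_add' := fun x y => by simp only [Matrix.mulVec_add, dotProduct_add]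
      map_smul' := fun c x => by simp only [Matrix.mulVec_smul, dotProduct_smul, smul_eq_mul, RingHom.id_apply] }

@[simp] lemma dpL_apply {Q R : ℕ} (u : Fin Q → ℝ) (V : Matrix (Fin Q) (Fin R) ℝ)
    (d : Fin R → ℝ) : dpL u V d = u ⬝ᵥ V.mulVec d := rfl

lemma dot_mulVec_bound {Q R : ℕ} (M : Matrix (Fin Q) (Fin R) ℝ) (x : Fin Q → ℝ)
    (y : Fin R → ℝ) : |x ⬝ᵥ M.mulVec y| ≤ (∑ i, ∑ j, |M i j|) * (‖x‖ * ‖y‖) := by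
  calc |x ⬝ᵥ M.mulVec y| = |∑ i, x i * (M.mulVec y) i| := rfl
    _ ≤ ∑ i, |x i * (M.mulVec y) i| := Finset.abs_sum_le_sum_abs _ _
    _ ≤ ∑ i, ‖x‖ * ((∑ j, |M i j|) * ‖y‖) := by
        refine Finset.sum_le_sum fun i _ => ?_
        rw [abs_mul]
        exact mul_le_mul (norm_le_pi_norm x i) (mulVec_entry_bound M y i) (abs_nonneg _)
          (norm_nonneg _)
    _ = (∑ i, ∑ j, |M i j|) * (‖x‖ * ‖y‖) := by
        rw [Finset.sum_mul]
        exact Finset.sum_congr rfl fun i _ => by ring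

/-- derivative of a symmetric quadratic form. -/
lemma hasFDerivAt_quadform {R : ℕ} (M : Matrix (Fin R) (Fin R) ℝ) (hM : M.IsSymm)
    (h : Fin R → ℝ) :
    HasFDerivAt (fun x => x ⬝ᵥ M.mulVec x) ((2:ℝ) • dpL h M) h := by
  have hsymm : ∀ x y : Fin R → ℝ, x ⬝ᵥ M.mulVec y = y ⬝ᵥ M.mulVec x := by
    intro x y
    rw [Matrix.dotProduct_mulVec, ← Matrix.mulVec_transpose, hM.eq, dotProduct_comm]
  rw [hasFDerivAt_iff_isLittleO_nhds_zero]
  have hexp : (fun d => (h + d) ⬝ᵥ M.mulVec (h + d) - h ⬝ᵥ M.mulVec h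
      - ((2:ℝ) • dpL h M) d) = fun d => d ⬝ᵥ M.mulVec d := by
    funext d
    simp only [ContinuousLinearMap.coe_smul', Pi.smul_apply, dpL_apply, smul_eq_mul,
      Matrix.mulVec_add, dotProduct_add, add_dotProduct]
    rw [hsymm d h]
    ring
  rw [hexp]
  refine quad_isLittleO _ (∑ i, ∑ j, |M i j|) fun d => ?_
  calc |d ⬝ᵥ M.mulVec d| ≤ (∑ i, ∑ j, |M i j|) * (‖d‖ * ‖d‖) := dot_mulVec_bound M d d
    _ = (∑ i, ∑ j, |M i j|) * ‖d‖ ^ 2 := by ring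

lemma hasFDerivAt_sum_sq {Q R : ℕ} (V : Matrix (Fin Q) (Fin R) ℝ) (v : Fin Q → ℝ)
    (h : Fin R → ℝ) :
    HasFDerivAt (fun x => ∑ i, ((V.mulVec x - v) i) ^ 2)
      ((2:ℝ) • dpL (V.mulVec h - v) V) h := by
  set u := V.mulVec h - v with hu
  rw [hasFDerivAt_iff_isLittleO_nhds_zero]
  have heq : (fun d => (∑ i, ((V.mulVec (h + d) - v) i) ^ 2) - (∑ i, ((V.mulVec h - v) i) ^ 2)
      - ((2:ℝ) • dpL u V) d) = fun d => ∑ i, (V.mulVec d) i ^ 2 := by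
    funext d
    have hsplit : V.mulVec (h + d) - v = u + V.mulVec d := by
      rw [Matrix.mulVec_add, hu]; abel
    simp only [ContinuousLinearMap.coe_smul', Pi.smul_apply, dpL_apply, smul_eq_mul, hsplit, ← hu]
    rw [show u ⬝ᵥ V.mulVec d = ∑ i, u i * (V.mulVec d) i from rfl, Finset.mul_sum,
      ← Finset.sum_sub_distrib, ← Finset.sum_sub_distrib]
    refine Finset.sum_congr rfl fun i _ => ?_
    simp only [Pi.add_apply]
    ring
  rw [heq]
  refine quad_isLittleO _ (∑ i, (∑ j, |V i j|) ^ 2) fun d => ?_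
  rw [abs_of_nonneg (by positivity)]
  exact sq_sum_mulVec_bound V d

lemma enorm_sq_eq {Q : ℕ} (x : Fin Q → ℝ) : _root_.enorm x ^ 2 = ∑ i, x i ^ 2 :=
  Real.sq_sqrt (by positivity)

lemma hasFDerivAt_psi_enorm {Q R : ℕ} (V : Matrix (Fin Q) (Fin R) ℝ) (v : Fin Q → ℝ)
    (ψ ν : ℝ → ℝ) (νbar : ℝ) (hC1 : ContDiff ℝ 1 ψ)
    (hν : ∀ t : ℝ, t ≠ 0 → ν t = deriv ψ t / t)
    (hb : ∀ t : ℝ, 0 ≤ ν t ∧ ν t ≤ νbar)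
    (h : Fin R → ℝ) :
    HasFDerivAt (fun x => ψ (enorm (V.mulVec x - v)))
      (ν (enorm (V.mulVec h - v)) • dpL (V.mulVec h - v) V) h := by
  set u := V.mulVec h - v with hu
  by_cases hu0 : u = 0
  · -- zero case
    have hz : ν (enorm u) • dpL u V = 0 := by
      ext d; simp [hu0, dpL_apply]
    rw [hz, hasFDerivAt_iff_isLittleO_nhds_zero]
    have henu : _root_.enorm u = 0 := by simp [hu0, _root_.enorm]
    have heq : (fun d => ψ (enorm (V.mulVec (h + d) - v)) - ψ (enorm (V.mulVec h - v))
        - (0 : (Fin R → ℝ) →L[ℝ] ℝ) d) = fun d => ψ (enorm (V.mulVec d)) - ψ 0 := by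
      funext d
      have hsplit : V.mulVec (h + d) - v = V.mulVec d := by
        rw [Matrix.mulVec_add]
        rw [hu] at hu0
        have : V.mulVec h - v = 0 := hu0
        rw [show V.mulVec h + V.mulVec d - v = (V.mulVec h - v) + V.mulVec d by abel, this]
        simp
      rw [hsplit, ← hu, henu]
      simp
    rw [heq]
    have hνbar : 0 ≤ νbar := le_trans (hb 0).1 (hb 0).2
    refine quad_isLittleO _ (νbar * ∑ i, (∑ j, |V i j|) ^ 2) fun d => ?_
    have h1 := hq_near_zero ψ ν νbar hC1 hν hb (enorm (V.mulVec d)) (Real.sqrt_nonneg _)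
    calc |ψ (enorm (V.mulVec d)) - ψ 0| ≤ νbar * _root_.enorm (V.mulVec d) ^ 2 := h1
      _ = νbar * ∑ i, (V.mulVec d) i ^ 2 := by rw [enorm_sq_eq]
      _ ≤ νbar * ((∑ i, (∑ j, |V i j|) ^ 2) * ‖d‖ ^ 2) :=
          mul_le_mul_of_nonneg_left (sq_sum_mulVec_bound V d) hνbar
      _ = νbar * (∑ i, (∑ j, |V i j|) ^ 2) * ‖d‖ ^ 2 := by ring
  · -- nonzero case
    have hsum : 0 < ∑ i, u i ^ 2 := by
      rcases Function.ne_iff.mp hu0 with ⟨i, hi⟩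
      refine Finset.sum_pos' (fun j _ => by positivity) ⟨i, Finset.mem_univ i, ?_⟩
      have : u i ≠ 0 := by simpa using hi
      positivity
    have ha : 0 < _root_.enorm u := Real.sqrt_pos.mpr hsum
    have hqh : Real.sqrt (∑ i, u i ^ 2) = _root_.enorm u := rfl
    have h1 : HasDerivAt Real.sqrt (1 / (2 * _root_.enorm u)) (∑ i, u i ^ 2) := by
      have := Real.hasDerivAt_sqrt (ne_of_gt hsum)
      simpa [hqh] using this
    have h2 : HasDerivAt ψ (deriv ψ (enorm u)) (Real.sqrt (∑ i, u i ^ 2)) := by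
      rw [hqh]; exact ((hC1.differentiable one_ne_zero) (enorm u)).hasDerivAt
    have h3 : HasDerivAt (fun t => ψ (Real.sqrt t))
        (deriv ψ (enorm u) * (1 / (2 * _root_.enorm u))) (∑ i, u i ^ 2) := h2.comp _ h1
    have h4 := h3.comp_hasFDerivAt h (hasFDerivAt_sum_sq V v h)
    rw [← hu] at h4
    have h5 : (deriv ψ (enorm u) * (1 / (2 * _root_.enorm u))) • ((2:ℝ) • dpL u V)
        = ν (enorm u) • dpL u V := by
      rw [smul_smul, hν (enorm u) (ne_of_gt ha)]
      congr 1
      field_simp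
    rw [h5] at h4
    exact h4

lemma dot_symm2 {R : ℕ} (M : Matrix (Fin R) (Fin R) ℝ) (hM : M.IsSymm) (x y : Fin R → ℝ) :
    x ⬝ᵥ M.mulVec y = y ⬝ᵥ M.mulVec x := by
  rw [Matrix.dotProduct_mulVec, ← Matrix.mulVec_transpose, hM.eq, dotProduct_comm]

lemma sum_mulVec' {R S : ℕ} (M : Fin S → Matrix (Fin R) (Fin R) ℝ) (d : Fin R → ℝ) :
    (∑ s, M s).mulVec d = ∑ s, (M s).mulVec d :=
  map_sum (AddMonoidHom.mk' (fun A : Matrix (Fin R) (Fin R) ℝ => A.mulVec d)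
    (fun A B => Matrix.add_mulVec A B d)) M Finset.univ

lemma dot_sum' {R S : ℕ} (x : Fin R → ℝ) (w : Fin S → (Fin R → ℝ)) :
    x ⬝ᵥ (∑ s, w s) = ∑ s, x ⬝ᵥ w s :=
  map_sum (AddMonoidHom.mk' (fun y : Fin R → ℝ => x ⬝ᵥ y)
    (fun a b => dotProduct_add x a b)) w Finset.univ

lemma dot_VtV {Q R : ℕ} (V : Matrix (Fin Q) (Fin R) ℝ) (d : Fin R → ℝ) :
    d ⬝ᵥ (Vᵀ * V).mulVec d = ∑ i, (V.mulVec d) i ^ 2 := by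
  rw [← Matrix.mulVec_mulVec, Matrix.dotProduct_mulVec, Matrix.vecMul_transpose]
  rw [show V.mulVec d ⬝ᵥ V.mulVec d = ∑ i, (V.mulVec d) i * (V.mulVec d) i from rfl]
  exact Finset.sum_congr rfl fun i _ => (sq ((V.mulVec d) i)).symm

/-- Proposition 1: the half-quadratic surrogate Θₙ(·, h) is a tangent majorant
of the penalized least squares cost Fₙ at h. -/
theorem proposition1_tangent_majorant
    {N S : ℕ} (P : Fin S → ℕ)
    (Rn V0 : Matrix (Fin N) (Fin N) ℝ)
    (hRsymm : Rn.IsSymm) (hRpsd : Rn.PosSemidef)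
    (hV0symm : V0.IsSymm) (hV0psd : V0.PosSemidef)
    (ρn : ℝ) (rn v0 : Fin N → ℝ)
    (Vs : ∀ s : Fin S, Matrix (Fin (P s)) (Fin N) ℝ)
    (vs : ∀ s : Fin S, Fin (P s) → ℝ)
    (ψ ν : Fin S → ℝ → ℝ) (νbar : ℝ)
    (heven : ∀ s, ∀ t : ℝ, ψ s (-t) = ψ s t)
    (hC1 : ∀ s, ContDiff ℝ 1 (ψ s))
    (hconc : ∀ s, ConcaveOn ℝ (Set.Ici (0 : ℝ)) (fun t => ψ s (Real.sqrt t)))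
    (hν : ∀ s, ∀ t : ℝ, t ≠ 0 → ν s t = deriv (ψ s) t / t)
    (hνlim : ∀ s, Filter.Tendsto (fun t => deriv (ψ s) t / t)
      (nhdsWithin 0 {(0 : ℝ)}ᶜ) (nhds (ν s 0)))
    (hνbound : ∀ s, ∀ t : ℝ, 0 ≤ ν s t ∧ ν s t ≤ νbar)
    (Ψ Fn : (Fin N → ℝ) → ℝ)
    (hΨ : ∀ h : Fin N → ℝ, Ψ h =
      (1 / 2) * (h ⬝ᵥ V0.mulVec h) - v0 ⬝ᵥ h +
        ∑ s, ψ s (enorm ((Vs s).mulVec h - vs s)))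
    (hFn : ∀ h : Fin N → ℝ, Fn h =
      (1 / 2) * ρn - rn ⬝ᵥ h + (1 / 2) * (h ⬝ᵥ Rn.mulVec h) + Ψ h)
    (An : (Fin N → ℝ) → Matrix (Fin N) (Fin N) ℝ)
    (hAn : ∀ h : Fin N → ℝ, An h =
      Rn + V0 + ∑ s, ν s (enorm ((Vs s).mulVec h - vs s)) • ((Vs s)ᵀ * Vs s)) :
    ∀ h : Fin N → ℝ,
      (∀ h' : Fin N → ℝ,
        Fn h' ≤ Fn h + fderiv ℝ Fn h (h' - h) +
          (1 / 2) * ((h' - h) ⬝ᵥ (An h).mulVec (h' - h))) ∧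
      Fn h = Fn h + fderiv ℝ Fn h (h - h) +
        (1 / 2) * ((h - h) ⬝ᵥ (An h).mulVec (h - h)) := by
  intro h
  have hFn' : Fn = fun x => (1/2) * ρn - rn ⬝ᵥ x + (1/2) * (x ⬝ᵥ Rn.mulVec x) +
      ((1/2) * (x ⬝ᵥ V0.mulVec x) - v0 ⬝ᵥ x + ∑ s, ψ s (enorm ((Vs s).mulVec x - vs s))) := by
    funext x; rw [hFn, hΨ]
  have dlin : ∀ w : Fin N → ℝ, HasFDerivAt (fun x : Fin N → ℝ => w ⬝ᵥ x)
      (dpL w (1 : Matrix (Fin N) (Fin N) ℝ)) h := by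
    intro w
    have hfun : (fun x : Fin N → ℝ => w ⬝ᵥ x) = ⇑(dpL w (1 : Matrix (Fin N) (Fin N) ℝ)) := by
      funext x; rw [dpL_apply, Matrix.one_mulVec]
    rw [hfun]; exact (dpL w 1).hasFDerivAt
  have dRn := hasFDerivAt_quadform Rn hRsymm h
  have dV0 := hasFDerivAt_quadform V0 hV0symm h
  have dS : ∀ s, HasFDerivAt (fun x => ψ s (enorm ((Vs s).mulVec x - vs s)))
      (ν s (enorm ((Vs s).mulVec h - vs s)) • dpL ((Vs s).mulVec h - vs s) (Vs s)) h :=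
    fun s => hasFDerivAt_psi_enorm (Vs s) (vs s) (ψ s) (ν s) νbar (hC1 s) (hν s) (hνbound s) h
  have dF : HasFDerivAt Fn
      (((0 : (Fin N → ℝ) →L[ℝ] ℝ) - dpL rn 1 + ((1:ℝ)/2) • ((2:ℝ) • dpL h Rn)) +
        (((1:ℝ)/2) • ((2:ℝ) • dpL h V0) - dpL v0 1 +
          ∑ s, ν s (enorm ((Vs s).mulVec h - vs s)) • dpL ((Vs s).mulVec h - vs s) (Vs s))) h := by
    rw [hFn']
    exact (((hasFDerivAt_const _ _).sub (dlin rn)).add (dRn.const_mul (1/2))).add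
      (((dV0.const_mul (1/2)).sub (dlin v0)).add (HasFDerivAt.fun_sum fun s _ => dS s))
  have hfd := dF.fderiv
  constructor
  · intro h'
    have key : ∀ dd : Fin N → ℝ, Fn (h + dd) ≤ Fn h + (fderiv ℝ Fn h) dd +
        (1/2) * (dd ⬝ᵥ (An h).mulVec dd) := by
      intro dd
      have hskey : ∀ s : Fin S, ψ s (enorm ((Vs s).mulVec (h + dd) - vs s)) ≤
          ψ s (enorm ((Vs s).mulVec h - vs s)) +
          ν s (enorm ((Vs s).mulVec h - vs s)) * (((Vs s).mulVec h - vs s) ⬝ᵥ (Vs s).mulVec dd) +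
          1/2 * (ν s (enorm ((Vs s).mulVec h - vs s)) * (dd ⬝ᵥ ((Vs s)ᵀ * Vs s).mulVec dd)) := by
        intro s
        have hcore := hq_core (ψ s) (ν s) (hC1 s) (hconc s) (hν s) (hνlim s)
          (enorm ((Vs s).mulVec h - vs s)) (enorm ((Vs s).mulVec (h + dd) - vs s))
          (Real.sqrt_nonneg _) (Real.sqrt_nonneg _)
        have hsplit : (Vs s).mulVec (h + dd) - vs s
            = ((Vs s).mulVec h - vs s) + (Vs s).mulVec dd := by
          rw [Matrix.mulVec_add]; abel
        have hbsq : _root_.enorm ((Vs s).mulVec (h + dd) - vs s) ^ 2 =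
            _root_.enorm ((Vs s).mulVec h - vs s) ^ 2 +
            2 * (((Vs s).mulVec h - vs s) ⬝ᵥ (Vs s).mulVec dd) +
            dd ⬝ᵥ ((Vs s)ᵀ * Vs s).mulVec dd := by
          rw [enorm_sq_eq, enorm_sq_eq, hsplit, dot_VtV]
          rw [show ((Vs s).mulVec h - vs s) ⬝ᵥ (Vs s).mulVec dd
              = ∑ i, ((Vs s).mulVec h - vs s) i * ((Vs s).mulVec dd) i from rfl]
          rw [Finset.mul_sum, ← Finset.sum_add_distrib, ← Finset.sum_add_distrib]
          refine Finset.sum_congr rfl fun i _ => ?_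
          simp only [Pi.add_apply]
          ring
        rw [hbsq] at hcore
        ring_nf at hcore ⊢
        linarith
      have hsum := Finset.sum_le_sum (s := (Finset.univ : Finset (Fin S))) (fun s (_ : s ∈ Finset.univ) => hskey s)
      rw [hfd, hFn', hAn]
      simp only [ContinuousLinearMap.add_apply, ContinuousLinearMap.sub_apply,
        ContinuousLinearMap.smul_apply, ContinuousLinearMap.zero_apply,
        ContinuousLinearMap.sum_apply, ContinuousLinearMap.coe_smul', Pi.smul_apply,
        dpL_apply, smul_eq_mul, Matrix.one_mulVec, Matrix.add_mulVec, dotProduct_add,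
        Matrix.mulVec_add, add_dotProduct, sum_mulVec', dot_sum',
        Matrix.smul_mulVec, dotProduct_smul]
      rw [dot_symm2 Rn hRsymm dd h, dot_symm2 V0 hV0symm dd h]
      rw [Finset.sum_add_distrib, Finset.sum_add_distrib] at hsum
      simp only [Matrix.mulVec_add] at hsum
      rw [← Finset.mul_sum] at hsum
      linarith [hsum]
    have := key (h' - h)
    rwa [add_sub_cancel] at this
  · simp
end

section
/- Under the MM subspace scheme: if Θ(h', h) = F(h) + ∇F(h)ᵀ(h'-h) + (1/2)(h'-h)ᵀA(h'-h) with A symmetric, 0 ≺ A ⪯ α^{-1}I, the subspace ran D contains both h and ∇F(h), and h⁺ minimizes Θ(·,h) over ran D, then α ‖∇F(h)‖² ≤ (h⁺ - h)ᵀ A (h⁺ - h). -/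
open Matrix

/-- Gradient-norm bound (80)–(81), (85) for the MM subspace step. -/
theorem mm_subspace_gradient_bound {N M : ℕ}
    (F : (Fin N → ℝ) → ℝ) (g h hplus : Fin N → ℝ)
    (A : Matrix (Fin N) (Fin N) ℝ)
    (hAsymm : A.IsSymm) (hApd : A.PosDef)
    (α : ℝ) (hα : 0 < α)
    (hAbound : ∀ v : Fin N → ℝ, v ⬝ᵥ A.mulVec v ≤ α⁻¹ * (v ⬝ᵥ v))
    (D : Matrix (Fin N) (Fin M) ℝ)
    (Θ : (Fin N → ℝ) → ℝ)
    (hΘ : ∀ x : Fin N → ℝ,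
      Θ x = F h + g ⬝ᵥ (x - h) + (1 / 2) * ((x - h) ⬝ᵥ A.mulVec (x - h)))
    (hh : ∃ u : Fin M → ℝ, h = D.mulVec u)
    (hg_ran : ∃ u : Fin M → ℝ, g = D.mulVec u)
    (hplus_ran : ∃ u : Fin M → ℝ, hplus = D.mulVec u)
    (hplus_min : ∀ u : Fin M → ℝ, Θ hplus ≤ Θ (D.mulVec u)) :
    α * (g ⬝ᵥ g) ≤ (hplus - h) ⬝ᵥ A.mulVec (hplus - h) := by
  obtain ⟨uh, hhu⟩ := hh
  obtain ⟨ug, hgu⟩ := hg_ran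
  obtain ⟨up, hpu⟩ := hplus_ran
  set d := hplus - h with hd
  have symm : ∀ v w : Fin N → ℝ, v ⬝ᵥ A.mulVec w = w ⬝ᵥ A.mulVec v := by
    intro v w
    rw [Matrix.dotProduct_mulVec, ← Matrix.mulVec_transpose, hAsymm.eq, dotProduct_comm]
  have psd : ∀ v : Fin N → ℝ, 0 ≤ v ⬝ᵥ A.mulVec v := fun v => by simpa using hApd.posSemidef.dotProduct_mulVec_nonneg v
  -- first order condition
  have foc : ∀ uv : Fin M → ℝ, g ⬝ᵥ (D.mulVec uv) + d ⬝ᵥ A.mulVec (D.mulVec uv) = 0 := by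
    intro uv
    set v := D.mulVec uv with hv
    set c := g ⬝ᵥ v + d ⬝ᵥ A.mulVec v with hc
    set b := v ⬝ᵥ A.mulVec v with hb
    have hbnn : 0 ≤ b := psd v
    have key : ∀ t : ℝ, 0 ≤ c * t + (1/2) * b * t ^ 2 := by
      intro t
      have h1 := hplus_min (up + t • uv)
      have h2 : D.mulVec (up + t • uv) = hplus + t • v := by
        rw [Matrix.mulVec_add, Matrix.mulVec_smul, ← hpu, hv]
      rw [h2, hΘ, hΘ] at h1
      have e1 : hplus + t • v - h = d + t • v := by
        simp [hd]; abel
      rw [e1] at h1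
      have e2 : (d + t • v) ⬝ᵥ A.mulVec (d + t • v)
          = d ⬝ᵥ A.mulVec d + 2 * t * (d ⬝ᵥ A.mulVec v) + t ^ 2 * b := by
        rw [Matrix.mulVec_add, Matrix.mulVec_smul]
        simp only [dotProduct_add, add_dotProduct, dotProduct_smul, smul_dotProduct,
          smul_eq_mul, hb]
        rw [symm v d]
        ring
      have e3 : g ⬝ᵥ (d + t • v) = g ⬝ᵥ d + t * (g ⬝ᵥ v) := by
        simp [dotProduct_add, dotProduct_smul, mul_comm]
      rw [e2, e3] at h1
      nlinarith [h1]
    set t0 := -c / (b + 1) with ht0def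
    have hb1 : (0:ℝ) < b + 1 := by linarith
    have ht0 : t0 * (b + 1) = -c := by
      rw [ht0def]; field_simp
    have ht := key t0
    nlinarith [sq_nonneg c, mul_pos hb1 hb1, mul_nonneg ht (sq_nonneg (b+1)),
      sq_nonneg t0, ht0]
  have foc_g : g ⬝ᵥ g + d ⬝ᵥ A.mulVec g = 0 := by have := foc ug; rwa [← hgu] at this
  have foc_d : g ⬝ᵥ d + d ⬝ᵥ A.mulVec d = 0 := by
    have h1 := foc up
    have h2 := foc uh
    have e : d = D.mulVec up - D.mulVec uh := by rw [hd, hpu, hhu]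
    rw [e] at h1 h2 ⊢
    simp only [dotProduct_sub, sub_dotProduct, Matrix.mulVec_sub] at h1 h2 ⊢
    linarith
  -- Cauchy–Schwarz for the A form
  set P := g ⬝ᵥ A.mulVec g with hP
  set X := d ⬝ᵥ A.mulVec d with hX
  set Q := d ⬝ᵥ A.mulVec g with hQ
  have expand : ∀ t : ℝ, (d + t • g) ⬝ᵥ A.mulVec (d + t • g)
      = X + 2 * t * Q + t ^ 2 * P := by
    intro t
    rw [Matrix.mulVec_add, Matrix.mulVec_smul]
    simp only [dotProduct_add, add_dotProduct, dotProduct_smul, smul_dotProduct,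
      smul_eq_mul, hX, hQ, hP]
    rw [symm g d]
    ring
  have CS : Q ^ 2 ≤ X * P := by
    rcases eq_or_lt_of_le (psd g) with hP0 | hP0
    · have hPz : P = 0 := hP0.symm
      have key : ∀ t : ℝ, 0 ≤ X + 2 * t * Q := by
        intro t
        have h1 := psd (d + t • g)
        rw [expand t, hPz] at h1
        linarith
      have hQ0 : Q = 0 := by
        by_contra hq
        rcases lt_or_gt_of_ne hq with hq | hq
        · have hk := key ((X + 1) / (-2 * Q))
          have he : 2 * ((X + 1) / (-2 * Q)) * Q = -(X + 1) := by
            field_simp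
          rw [he] at hk; linarith
        · have hk := key (-(X + 1) / (2 * Q))
          have he : 2 * (-(X + 1) / (2 * Q)) * Q = -(X + 1) := by
            field_simp
          rw [he] at hk; linarith
      rw [hQ0, hPz]
      nlinarith [psd d]
    · have hPpos : 0 < P := hP0
      set t := -(Q / P) with htdef
      have h1 := psd (d + t • g)
      rw [expand t] at h1
      have htP : t * P = -Q := by rw [htdef]; field_simp
      have h3 : P * (X + 2 * t * Q + t ^ 2 * P) = X * P - Q ^ 2 := by
        nlinarith [htP]
      nlinarith [mul_nonneg (le_of_lt hPpos) h1]
  -- combine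
  have hαP : α * P ≤ g ⬝ᵥ g := by
    have hb := hAbound g
    rw [← hP] at hb
    calc α * P ≤ α * (α⁻¹ * (g ⬝ᵥ g)) := by nlinarith
    _ = g ⬝ᵥ g := by field_simp
  have hGQ : g ⬝ᵥ g = -Q := by linarith
  have hGnn : 0 ≤ g ⬝ᵥ g := by
    unfold dotProduct
    exact Finset.sum_nonneg fun i _ => mul_self_nonneg _
  rcases eq_or_lt_of_le hGnn with hG0 | hG0
  · rw [← hG0]; simpa using psd d
  · have h1 : (g ⬝ᵥ g) ^ 2 ≤ X * P := by rw [hGQ]; nlinarith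
    nlinarith [mul_le_mul_of_nonneg_left h1 hα.le,
      mul_le_mul_of_nonneg_left hαP (psd d), hG0]
end
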